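/- Let f₁, f₂ : (0,∞) → ℝ be twice differentiable on (r,R), convex, with f₁(1) = f₂(1) = 0, f₂''(x) > 0 on (r,R), and suppose m ≤ f₁''(x)/f₂''(x) ≤ M for all x ∈ (r,R). Then for all P, Q ∈ Γ_n with r < p_i/q_i < R for all i, m·∑q_i f₂(p_i/q_i) ≤ ∑q_i f₁(p_i/q_i) ≤ M·∑q_i f₂(p_i/q_i). -/

import Mathlib

open Finset Real

lemma convexAux (f₁ f₂ : ℝ → ℝ) (r R a b : ℝ)
    (hd1 : ∀ x ∈ Set.Ioo r R, DifferentiableAt ℝ f₁ x ∧ DifferentiableAt ℝ (deriv f₁) x)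
    (hd2 : ∀ x ∈ Set.Ioo r R, DifferentiableAt ℝ f₂ x ∧ DifferentiableAt ℝ (deriv f₂) x)
    (hge : ∀ x ∈ Set.Ioo r R, 0 ≤ a * deriv (deriv f₁) x + b * deriv (deriv f₂) x) :
    ConvexOn ℝ (Set.Ioo r R) (fun x => a * f₁ x + b * f₂ x) := by
  have hopen : IsOpen (Set.Ioo r R) := isOpen_Ioo
  have hint : interior (Set.Ioo r R) = Set.Ioo r R := hopen.interior_eq
  have hdg : ∀ x ∈ Set.Ioo r R,
      DifferentiableAt ℝ (fun y => a * f₁ y + b * f₂ y) x := fun x hx =>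
    ((hd1 x hx).1.const_mul a).add ((hd2 x hx).1.const_mul b)
  have hderiv : ∀ x ∈ Set.Ioo r R,
      deriv (fun y => a * f₁ y + b * f₂ y) x = a * deriv f₁ x + b * deriv f₂ x := by
    intro x hx
    rw [deriv_fun_add ((hd1 x hx).1.const_mul a) ((hd2 x hx).1.const_mul b),
      deriv_const_mul a (hd1 x hx).1, deriv_const_mul b (hd2 x hx).1]
  have hderiv2 : ∀ x ∈ Set.Ioo r R,
      deriv (deriv (fun y => a * f₁ y + b * f₂ y)) x
        = a * deriv (deriv f₁) x + b * deriv (deriv f₂) x := by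
    intro x hx
    have heq : deriv (fun y => a * f₁ y + b * f₂ y)
        =ᶠ[nhds x] fun y => a * deriv f₁ y + b * deriv f₂ y := by
      filter_upwards [hopen.mem_nhds hx] with y hy using hderiv y hy
    rw [heq.deriv_eq, deriv_fun_add ((hd1 x hx).2.const_mul a) ((hd2 x hx).2.const_mul b),
      deriv_const_mul a (hd1 x hx).2, deriv_const_mul b (hd2 x hx).2]
  refine convexOn_of_deriv2_nonneg (convex_Ioo r R)
    (fun x hx => (hdg x hx).continuousAt.continuousWithinAt)
    (fun x hx => (hdg x (hint ▸ hx)).differentiableWithinAt)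
    (fun x hx => ?_) (fun x hx => ?_)
  · rw [hint] at hx
    have heq : deriv (fun y => a * f₁ y + b * f₂ y)
        =ᶠ[nhds x] fun y => a * deriv f₁ y + b * deriv f₂ y := by
      filter_upwards [hopen.mem_nhds hx] with y hy using hderiv y hy
    have : DifferentiableAt ℝ (fun y => a * deriv f₁ y + b * deriv f₂ y) x :=
      ((hd1 x hx).2.const_mul a).add ((hd2 x hx).2.const_mul b)
    exact (this.congr_of_eventuallyEq heq).differentiableWithinAt
  · rw [hint] at hx
    simp only [Function.iterate_succ, Function.iterate_zero, Function.comp_apply, id_eq]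
    rw [hderiv2 x hx]
    exact hge x hx

lemma jensenAux (g : ℝ → ℝ) (r R : ℝ) (hg : ConvexOn ℝ (Set.Ioo r R) g) (hg1 : g 1 = 0)
    (n : ℕ) (p q : Fin n → ℝ) (hq : ∀ i, 0 < q i)
    (hp1 : ∑ i, p i = 1) (hq1 : ∑ i, q i = 1)
    (hrR : ∀ i, r < p i / q i ∧ p i / q i < R) :
    0 ≤ ∑ i, q i * g (p i / q i) := by
  have hsum : ∑ i, q i • (p i / q i) = 1 := by
    rw [← hp1]
    exact Finset.sum_congr rfl fun i _ => by
      rw [smul_eq_mul, mul_div_cancel₀ _ (hq i).ne']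
  have := hg.map_sum_le (t := Finset.univ) (w := q) (p := fun i => p i / q i)
    (fun i _ => (hq i).le) hq1 (fun i _ => ⟨(hrR i).1, (hrR i).2⟩)
  rw [hsum, hg1] at this
  simpa using this

theorem stmt6 (f₁ f₂ : ℝ → ℝ) (r R m M : ℝ)
    (hc1 : ConvexOn ℝ (Set.Ioi 0) f₁) (hc2 : ConvexOn ℝ (Set.Ioi 0) f₂)
    (h11 : f₁ 1 = 0) (h21 : f₂ 1 = 0)
    (hd1 : ∀ x ∈ Set.Ioo r R, DifferentiableAt ℝ f₁ x ∧ DifferentiableAt ℝ (deriv f₁) x)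
    (hd2 : ∀ x ∈ Set.Ioo r R, DifferentiableAt ℝ f₂ x ∧ DifferentiableAt ℝ (deriv f₂) x)
    (hpos : ∀ x ∈ Set.Ioo r R, 0 < deriv (deriv f₂) x)
    (hmM : ∀ x ∈ Set.Ioo r R, m ≤ deriv (deriv f₁) x / deriv (deriv f₂) x ∧
        deriv (deriv f₁) x / deriv (deriv f₂) x ≤ M)
    (n : ℕ) (p q : Fin n → ℝ)
    (hp : ∀ i, 0 < p i) (hq : ∀ i, 0 < q i)
    (hp1 : ∑ i, p i = 1) (hq1 : ∑ i, q i = 1)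
    (hrR : ∀ i, r < p i / q i ∧ p i / q i < R) :
    m * ∑ i, q i * f₂ (p i / q i) ≤ ∑ i, q i * f₁ (p i / q i) ∧
      ∑ i, q i * f₁ (p i / q i) ≤ M * ∑ i, q i * f₂ (p i / q i) := by
  have h1mem : (1 : ℝ) ∈ Set.Ioo r R := by
    have hsum : ∑ i, q i • (p i / q i) = 1 := by
      rw [← hp1]
      exact Finset.sum_congr rfl fun i _ => by rw [smul_eq_mul, mul_div_cancel₀ _ (hq i).ne']
    rw [← hsum]
    exact (convex_Ioo r R).sum_mem (fun i _ => (hq i).le) hq1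
      (fun i _ => ⟨(hrR i).1, (hrR i).2⟩)
  constructor
  · have hconv : ConvexOn ℝ (Set.Ioo r R) (fun x => 1 * f₁ x + (-m) * f₂ x) := by
      refine convexAux f₁ f₂ r R 1 (-m) hd1 hd2 fun x hx => ?_
      have h := (hmM x hx).1
      have hpos' := hpos x hx
      have h' : m * deriv (deriv f₂) x ≤ deriv (deriv f₁) x := (le_div_iff₀ hpos').mp h
      linarith
    have := jensenAux _ r R hconv (by simp [h11, h21]) n p q hq hp1 hq1 hrR
    have hrw : ∑ i, q i * (1 * f₁ (p i / q i) + (-m) * f₂ (p i / q i))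
        = ∑ i, q i * f₁ (p i / q i) - m * ∑ i, q i * f₂ (p i / q i) := by
      rw [Finset.mul_sum]
      rw [← Finset.sum_sub_distrib]
      exact Finset.sum_congr rfl fun i _ => by ring
    rw [hrw] at this
    linarith
  · have hconv : ConvexOn ℝ (Set.Ioo r R) (fun x => (-1) * f₁ x + M * f₂ x) := by
      refine convexAux f₁ f₂ r R (-1) M hd1 hd2 fun x hx => ?_
      have h := (hmM x hx).2
      have hpos' := hpos x hx
      nlinarith [(div_le_iff₀ hpos').mp h]
    have := jensenAux _ r R hconv (by simp [h11, h21]) n p q hq hp1 hq1 hrR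
    have hrw : ∑ i, q i * ((-1) * f₁ (p i / q i) + M * f₂ (p i / q i))
        = M * ∑ i, q i * f₂ (p i / q i) - ∑ i, q i * f₁ (p i / q i) := by
      rw [Finset.mul_sum, ← Finset.sum_sub_distrib]
      exact Finset.sum_congr rfl fun i _ => by ring
    rw [hrw] at this
    linarith
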